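/- arXiv:1711.07956 — 2 statements merged into one kernel-verified Lean document; each statement's English description precedes it below -/
import Mathlib

section
/- For fixed W ∈ (0, 1/2) there exists a constant C (depending only on W) such that for all N ∈ ℕ with 2NW ≥ 2: 0 ≤ 2NW − Σ_{ℓ=0}^{N−1} λ_ℓ(B_{N,W})² ≤ C·log(2NW). (Together with Σ_ℓ λ_ℓ(B_{N,W}) = 2NW, this says Σ_ℓ λ_ℓ(B_{N,W})² = 2NW − O(log(2NW)).) -/
set_option autoImplicit false

open Real

noncomputable section

/-- The `N × N` prolate matrix `B_{N,W}`, with entries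
`B_{N,W}[m,n] = sin(2πW(m−n))/(π(m−n))` for `m ≠ n` and `B_{N,W}[m,m] = 2W`. -/
def prolateMatrix (N : ℕ) (W : ℝ) : Matrix (Fin N) (Fin N) ℝ :=
  fun m n => if (m : ℕ) = (n : ℕ) then 2 * W
    else Real.sin (2 * π * W * ((m : ℝ) - (n : ℝ))) / (π * ((m : ℝ) - (n : ℝ)))

namespace ProlateAux

/-- `s W k = sin(2πWk)² / (πk)²` (with value `0` at `k = 0`). -/
def s (W : ℝ) (k : ℕ) : ℝ := Real.sin (2 * π * W * k) ^ 2 / (π * k) ^ 2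

lemma s_zero (W : ℝ) : s W 0 = 0 := by simp [s]

lemma s_nonneg (W : ℝ) (k : ℕ) : 0 ≤ s W k := by
  unfold s; positivity

lemma s_le (W : ℝ) (k : ℕ) : s W k ≤ 1 / (π * k) ^ 2 := by
  unfold s
  rcases Nat.eq_zero_or_pos k with rfl | hk
  · simp
  · have hd : (0:ℝ) < (π * k) ^ 2 := by
      have : (0:ℝ) < (k:ℝ) := by exact_mod_cast hk
      positivity
    gcongr
    exact Real.sin_sq_le_one _

lemma bern2_eval (x : ℝ) :
    (Polynomial.map (algebraMap ℚ ℝ) (Polynomial.bernoulli 2)).eval x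
      = x ^ 2 - x + 1 / 6 := by
  have h2 : (_root_.bernoulli 2 : ℚ) = 1 / 6 := by
    rw [bernoulli_eq_bernoulli'_of_ne_one (by norm_num), bernoulli'_two]
  simp [Polynomial.bernoulli, Finset.sum_range_succ, h2, bernoulli_one]
  ring

lemma hasSum_s {W : ℝ} (hW : W ∈ Set.Ioo (0:ℝ) (1/2)) :
    HasSum (s W) (W * (1 - 2 * W)) := by
  obtain ⟨hW0, hW1⟩ := hW
  have hx : (2 * W) ∈ Set.Icc (0:ℝ) 1 := ⟨by linarith, by linarith⟩
  have h1 := hasSum_one_div_nat_pow_mul_cos one_ne_zero hx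
  have h2 := hasSum_zeta_two
  have h3 := (h2.sub h1).mul_left (1 / (2 * π ^ 2))
  convert h3 using 1
  · rfl
  · funext n
    rcases n with _ | n
    · simp [s]
    · have hn : ((n + 1 : ℕ) : ℝ) ≠ 0 := by positivity
      have hπ : π ≠ 0 := pi_ne_zero
      rw [s, Real.sin_sq_eq_half_sub]
      have harg : 2 * π * ((n+1 : ℕ) : ℝ) * (2 * W) = 2 * (2 * π * W * ((n+1 : ℕ) : ℝ)) := by
        ring
      rw [harg]
      rw [show (2*1 : ℕ) = 2 from rfl]
      rw [mul_pow]
      rw [div_eq_iff (by positivity : (π ^ 2 * ((n+1 : ℕ):ℝ) ^ 2) ≠ 0)]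
      field_simp
  · rw [show (2*1 : ℕ) = 2 from rfl, bern2_eval]
    have hπ : π ≠ 0 := pi_ne_zero
    norm_num [Nat.factorial]
    field_simp
    ring

lemma summable_s {W : ℝ} (hW : W ∈ Set.Ioo (0:ℝ) (1/2)) : Summable (s W) :=
  (hasSum_s hW).summable

/-- Tail sum `T W j = ∑_{k ≥ j} s W k`. -/
def T (W : ℝ) (j : ℕ) : ℝ := ∑' k : ℕ, s W (k + j)

lemma T_nonneg (W : ℝ) (j : ℕ) : 0 ≤ T W j :=
  tsum_nonneg fun k => s_nonneg W _

lemma T_eq {W : ℝ} (hW : W ∈ Set.Ioo (0:ℝ) (1/2)) (n : ℕ) :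
    T W n = W * (1 - 2 * W) - ∑ i ∈ Finset.range n, s W i := by
  have h := (summable_s hW).sum_add_tsum_nat_add n
  rw [(hasSum_s hW).tsum_eq] at h
  unfold T
  linarith

lemma one_div_sq_le (a : ℝ) (ha : 1 ≤ a) : 1 / a ^ 2 ≤ 2 * (1 / a - 1 / (a + 1)) := by
  have ha0 : (0:ℝ) < a := lt_of_lt_of_le one_pos ha
  have ha1 : (0:ℝ) < a + 1 := by linarith
  rw [div_sub_div _ _ ha0.ne' ha1.ne', one_mul, mul_one, show a + 1 - a = 1 by ring,
    mul_one_div, div_le_div_iff₀ (by positivity) (by positivity)]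
  nlinarith

lemma T_le (W : ℝ) {j : ℕ} (hj : 1 ≤ j) : T W j ≤ 2 / (π ^ 2 * j) := by
  apply Real.tsum_le_of_sum_range_le (fun k => s_nonneg W _)
  intro M
  have hπ : (0:ℝ) < π := pi_pos
  have hj0 : (0:ℝ) < (j:ℝ) := by exact_mod_cast hj
  calc ∑ k ∈ Finset.range M, s W (k + j)
      ≤ ∑ k ∈ Finset.range M,
          (1 / π ^ 2) * (2 * (1 / ((k + j : ℕ):ℝ) - 1 / ((k + 1 + j : ℕ):ℝ))) := by
        apply Finset.sum_le_sum
        intro k _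
        refine (s_le W (k + j)).trans ?_
        have hkj : (1:ℝ) ≤ ((k + j : ℕ):ℝ) := by
          have h1 : 1 ≤ k + j := le_trans hj (Nat.le_add_left j k)
          exact_mod_cast h1
        have hcast : ((k + 1 + j : ℕ):ℝ) = ((k + j : ℕ):ℝ) + 1 := by push_cast; ring
        have hkj0 : (0:ℝ) < ((k + j : ℕ):ℝ) := lt_of_lt_of_le one_pos hkj
        have heq : 1 / (π * ((k + j : ℕ):ℝ)) ^ 2
            = (1 / π ^ 2) * (1 / ((k + j : ℕ):ℝ) ^ 2) := by
          rw [mul_pow]; rw [one_div, mul_inv, one_div, one_div]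
        rw [heq, hcast]
        apply mul_le_mul_of_nonneg_left _ (by positivity)
        exact one_div_sq_le _ hkj
      _ = (1 / π ^ 2) * (2 * (1 / ((0 + j : ℕ):ℝ) - 1 / ((M + j : ℕ):ℝ))) := by
        rw [← Finset.mul_sum]
        congr 1
        rw [← Finset.mul_sum]
        congr 1
        exact Finset.sum_range_sub' (fun k => 1 / ((k + j : ℕ):ℝ)) M
      _ ≤ (1 / π ^ 2) * (2 * (1 / (j:ℝ))) := by
        apply mul_le_mul_of_nonneg_left _ (by positivity)
        have hM : (0:ℝ) ≤ 1 / ((M + j : ℕ):ℝ) := by positivity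
        have h0j : ((0 + j : ℕ):ℝ) = (j:ℝ) := by norm_num
        rw [h0j]
        linarith
      _ = 2 / (π ^ 2 * (j:ℝ)) := by
        field_simp

/- ## Matrix lemmas -/

variable {N : ℕ} {A : Matrix (Fin N) (Fin N) ℝ}

lemma trace_eq_sum_eigenvalues (hA : A.IsHermitian) :
    A.trace = ∑ i, hA.eigenvalues i := by
  have hSU : star (hA.eigenvectorUnitary : Matrix (Fin N) (Fin N) ℝ)
      * (hA.eigenvectorUnitary : Matrix (Fin N) (Fin N) ℝ) = 1 :=
    Matrix.mem_unitaryGroup_iff'.mp hA.eigenvectorUnitary.2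
  conv_lhs => rw [hA.spectral_theorem, Unitary.conjStarAlgAut_apply]
  rw [Matrix.trace_mul_cycle, hSU, Matrix.one_mul, Matrix.trace_diagonal]
  simp

lemma trace_sq_eq_sum_eigenvalues_sq (hA : A.IsHermitian) :
    (A * A).trace = ∑ i, hA.eigenvalues i ^ 2 := by
  have hSU : star (hA.eigenvectorUnitary : Matrix (Fin N) (Fin N) ℝ)
      * (hA.eigenvectorUnitary : Matrix (Fin N) (Fin N) ℝ) = 1 :=
    Matrix.mem_unitaryGroup_iff'.mp hA.eigenvectorUnitary.2
  have key : A * A = (hA.eigenvectorUnitary : Matrix (Fin N) (Fin N) ℝ)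
      * (Matrix.diagonal (RCLike.ofReal ∘ hA.eigenvalues)
          * Matrix.diagonal (RCLike.ofReal ∘ hA.eigenvalues))
      * star (hA.eigenvectorUnitary : Matrix (Fin N) (Fin N) ℝ) := by
    conv_lhs => rw [hA.spectral_theorem, Unitary.conjStarAlgAut_apply]
    simp only [Matrix.mul_assoc]
    rw [show star (hA.eigenvectorUnitary : Matrix (Fin N) (Fin N) ℝ)
        * ((hA.eigenvectorUnitary : Matrix (Fin N) (Fin N) ℝ)
          * (Matrix.diagonal (RCLike.ofReal ∘ hA.eigenvalues)
            * star (hA.eigenvectorUnitary : Matrix (Fin N) (Fin N) ℝ)))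
        = Matrix.diagonal (RCLike.ofReal ∘ hA.eigenvalues)
            * star (hA.eigenvectorUnitary : Matrix (Fin N) (Fin N) ℝ) by
      rw [← Matrix.mul_assoc, hSU, Matrix.one_mul]]
  rw [key, Matrix.trace_mul_cycle, ← Matrix.mul_assoc, hSU, Matrix.one_mul,
    Matrix.diagonal_mul_diagonal, Matrix.trace_diagonal]
  simp [sq]

/- ## entries of the prolate matrix -/

/-- The natural-number version of the prolate matrix entries. -/
def e (W : ℝ) (M n : ℕ) : ℝ :=
  if M = n then 2 * W
    else Real.sin (2 * π * W * ((M : ℝ) - (n : ℝ))) / (π * ((M : ℝ) - (n : ℝ)))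

lemma prolate_apply (nn : ℕ) (W : ℝ) (m n : Fin nn) :
    prolateMatrix nn W m n = e W (m : ℕ) (n : ℕ) := rfl

lemma prolate_symm (nn : ℕ) (W : ℝ) (m n : Fin nn) :
    prolateMatrix nn W n m = prolateMatrix nn W m n := by
  rw [prolate_apply, prolate_apply]
  unfold e
  rcases eq_or_ne (m : ℕ) (n : ℕ) with h | h
  · rw [if_pos h, if_pos h.symm]
  · rw [if_neg h, if_neg (Ne.symm h)]
    rw [show ((n:ℕ):ℝ) - ((m:ℕ):ℝ) = -(((m:ℕ):ℝ) - ((n:ℕ):ℝ)) by ring]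
    rw [mul_neg, mul_neg, Real.sin_neg, neg_div_neg_eq]

lemma e_sq_of_lt {W : ℝ} {M n : ℕ} (h : n < M) : (e W M n) ^ 2 = s W (M - n) := by
  have hne : M ≠ n := (Nat.ne_of_lt h).symm
  have hc : ((M - n : ℕ):ℝ) = (M:ℝ) - (n:ℝ) := by
    push_cast [Nat.cast_sub h.le]; ring
  rw [e, if_neg hne, s, hc, div_pow]

lemma e_sq_of_gt {W : ℝ} {M n : ℕ} (h : M < n) : (e W M n) ^ 2 = s W (n - M) := by
  have hne : M ≠ n := Nat.ne_of_lt h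
  have hc : ((n - M : ℕ):ℝ) = (n:ℝ) - (M:ℝ) := by
    push_cast [Nat.cast_sub h.le]; ring
  rw [e, if_neg hne, s, hc]
  rw [show (M:ℝ) - (n:ℝ) = -((n:ℝ) - (M:ℝ)) by ring]
  rw [mul_neg, mul_neg, Real.sin_neg, neg_div_neg_eq, div_pow]

/-- Row sum of squares. -/
lemma row_sum (nn : ℕ) (W : ℝ) (m : Fin nn) :
    ∑ n : Fin nn, (prolateMatrix nn W m n) ^ 2
      = 4 * W ^ 2 + ∑ i ∈ Finset.range (m : ℕ), s W (i + 1)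
        + ∑ i ∈ Finset.range (nn - 1 - (m : ℕ)), s W (i + 1) := by
  set M : ℕ := (m : ℕ) with hM
  have hm : M < nn := m.2
  have h1 : ∑ n : Fin nn, (prolateMatrix nn W m n) ^ 2
      = ∑ n ∈ Finset.range nn, (e W M n) ^ 2 := by
    rw [← Fin.sum_univ_eq_sum_range (fun n => (e W M n) ^ 2) nn]
    exact Finset.sum_congr rfl fun n _ => by rw [prolate_apply]
  rw [h1]
  rw [← Finset.sum_range_add_sum_Ico _ (Nat.succ_le_of_lt hm)]
  congr 1
  · -- ∑_{n < M+1}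
    rw [Finset.sum_range_succ]
    have hdiag : (e W M M) ^ 2 = 4 * W ^ 2 := by
      rw [e, if_pos rfl]; ring
    rw [hdiag, add_comm]
    congr 1
    have hrefl := Finset.sum_range_reflect (fun i => s W (i + 1)) M
    rw [← hrefl]
    apply Finset.sum_congr rfl
    intro n hn
    rw [Finset.mem_range] at hn
    rw [e_sq_of_lt hn]
    congr 1
    omega
  · -- ∑_{M < n < nn}
    rw [Finset.sum_Ico_eq_sum_range]
    have hlen : nn - (M + 1) = nn - 1 - M := by omega
    rw [hlen]
    apply Finset.sum_congr rfl
    intro i _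
    rw [e_sq_of_gt (by omega : M < M + 1 + i)]
    congr 1
    omega

end ProlateAux

open ProlateAux

/-- For fixed `W ∈ (0, 1/2)` there is a constant `C` (depending only on `W`)
such that for all `N` with `2NW ≥ 2`:
`0 ≤ 2NW − Σ_{ℓ=0}^{N−1} λ_ℓ(B_{N,W})² ≤ C·log(2NW)`, i.e.
`Σ_ℓ λ_ℓ(B_{N,W})² = 2NW − O(log(2NW))`. -/
theorem prolate_sum_sq_eigenvalues (W : ℝ) (hW : W ∈ Set.Ioo (0:ℝ) (1/2))
    (hH : ∀ N : ℕ, (prolateMatrix N W).IsHermitian) :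
    ∃ C : ℝ, 0 < C ∧ ∀ N : ℕ, 2 ≤ 2 * (N : ℝ) * W →
      0 ≤ 2 * (N : ℝ) * W - ∑ ℓ : Fin N, ((hH N).eigenvalues ℓ) ^ 2
      ∧ 2 * (N : ℝ) * W - ∑ ℓ : Fin N, ((hH N).eigenvalues ℓ) ^ 2
          ≤ C * Real.log (2 * (N : ℝ) * W) := by
  obtain ⟨hW0, hW1⟩ := hW
  have hπ : (0:ℝ) < π := pi_pos
  have hlog2 : (0:ℝ) < Real.log 2 := Real.log_pos (by norm_num)
  have h2W1 : 2 * W < 1 := by linarith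
  have hlog2W : Real.log (2 * W) < 0 := Real.log_neg (by linarith) h2W1
  have hCpos : 0 < 1 + (1 - Real.log (2 * W)) / Real.log 2 := by
    have hd : 0 < (1 - Real.log (2 * W)) / Real.log 2 := div_pos (by linarith) hlog2
    linarith
  refine ⟨1 + (1 - Real.log (2 * W)) / Real.log 2, hCpos, ?_⟩
  intro N hN
  -- basic facts
  have hN1 : 1 ≤ N := by
    by_contra h
    push_neg at h
    interval_cases N
    simp at hN
    linarith
  have hNR : (1:ℝ) ≤ (N:ℝ) := by exact_mod_cast hN1
  set B := prolateMatrix N W with hB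
  -- the key identity
  have key : 2 * (N : ℝ) * W - ∑ ℓ : Fin N, ((hH N).eigenvalues ℓ) ^ 2
      = ∑ M ∈ Finset.range N, (T W (M + 1) + T W (N - M)) := by
    rw [← trace_sq_eq_sum_eigenvalues_sq (hH N)]
    have htr : (B * B).trace = ∑ m : Fin N, ∑ n : Fin N, (B m n) ^ 2 := by
      rw [Matrix.trace]
      apply Finset.sum_congr rfl
      intro m _
      rw [Matrix.diag, Matrix.mul_apply]
      apply Finset.sum_congr rfl
      intro n _
      rw [hB, prolate_symm, sq]
    rw [htr]
    have hrow : ∑ m : Fin N, ∑ n : Fin N, (B m n) ^ 2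
        = ∑ M ∈ Finset.range N, (4 * W ^ 2 + ∑ i ∈ Finset.range M, s W (i + 1)
            + ∑ i ∈ Finset.range (N - 1 - M), s W (i + 1)) := by
      rw [← Fin.sum_univ_eq_sum_range (fun M => 4 * W ^ 2 + ∑ i ∈ Finset.range M, s W (i + 1)
            + ∑ i ∈ Finset.range (N - 1 - M), s W (i + 1)) N]
      exact Finset.sum_congr rfl fun m _ => row_sum N W m
    rw [hrow]
    have hconst : 2 * (N : ℝ) * W = ∑ _M ∈ Finset.range N, 2 * W := by
      rw [Finset.sum_const, Finset.card_range, nsmul_eq_mul]; ring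
    rw [hconst, ← Finset.sum_sub_distrib]
    apply Finset.sum_congr rfl
    intro M hM
    rw [Finset.mem_range] at hM
    have hT1 : T W (M + 1) = W * (1 - 2 * W) - ∑ i ∈ Finset.range M, s W (i + 1) := by
      rw [T_eq ⟨hW0, hW1⟩, Finset.sum_range_succ', s_zero, add_zero]
    have hNM : N - M = (N - 1 - M) + 1 := by omega
    have hT2 : T W (N - M) = W * (1 - 2 * W) - ∑ i ∈ Finset.range (N - 1 - M), s W (i + 1) := by
      rw [hNM, T_eq ⟨hW0, hW1⟩, Finset.sum_range_succ', s_zero, add_zero]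
    rw [hT1, hT2]
    ring
  constructor
  · rw [key]
    apply Finset.sum_nonneg
    intro M _
    have := T_nonneg W (M + 1)
    have := T_nonneg W (N - M)
    linarith
  · rw [key]
    -- bound by harmonic sums
    have hbound : ∑ M ∈ Finset.range N, (T W (M + 1) + T W (N - M))
        ≤ (4 / π ^ 2) * ∑ M ∈ Finset.range N, 1 / ((M + 1 : ℕ):ℝ) := by
      have step : ∀ M ∈ Finset.range N, T W (M + 1) + T W (N - M)
          ≤ 2 / (π ^ 2 * ((M + 1 : ℕ):ℝ)) + 2 / (π ^ 2 * ((N - M : ℕ):ℝ)) := by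
        intro M hM
        rw [Finset.mem_range] at hM
        have h1 := T_le W (Nat.le_add_left 1 M)
        have h2 := T_le W (by omega : 1 ≤ N - M)
        exact add_le_add h1 h2
      refine (Finset.sum_le_sum step).trans ?_
      rw [Finset.sum_add_distrib]
      have hsnd : ∑ M ∈ Finset.range N, 2 / (π ^ 2 * ((N - M : ℕ):ℝ))
          = ∑ M ∈ Finset.range N, 2 / (π ^ 2 * ((M + 1 : ℕ):ℝ)) := by
        rw [← Finset.sum_range_reflect (fun M => 2 / (π ^ 2 * ((N - M : ℕ):ℝ))) N]
        apply Finset.sum_congr rfl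
        intro j hj
        rw [Finset.mem_range] at hj
        rw [show N - (N - 1 - j) = j + 1 from by omega]
      rw [hsnd, Finset.mul_sum, ← two_mul]
      apply le_of_eq
      rw [Finset.mul_sum]
      apply Finset.sum_congr rfl
      intro M _
      have : ((M + 1 : ℕ):ℝ) ≠ 0 := by positivity
      field_simp
      ring
    have hharm : ∑ M ∈ Finset.range N, 1 / ((M + 1 : ℕ):ℝ) = ((harmonic N : ℚ) : ℝ) := by
      rw [harmonic]
      push_cast
      apply Finset.sum_congr rfl
      intro i _
      rw [one_div]
    have hharm_le : ((harmonic N : ℚ) : ℝ) ≤ 1 + Real.log N := harmonic_le_one_add_log N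
    have hpi4 : 4 / π ^ 2 ≤ 1 := by
      have h3 : (3:ℝ) < π := pi_gt_three
      rw [div_le_one (by positivity)]
      nlinarith
    have hlogN_nonneg : 0 ≤ Real.log N := Real.log_nonneg hNR
    have hstep2 : (4 / π ^ 2) * ∑ M ∈ Finset.range N, 1 / ((M + 1 : ℕ):ℝ)
        ≤ 1 + Real.log N := by
      rw [hharm]
      calc (4 / π ^ 2) * ((harmonic N : ℚ) : ℝ) ≤ 1 * ((harmonic N : ℚ) : ℝ) := by
            apply mul_le_mul_of_nonneg_right hpi4
            have : (0:ℚ) ≤ harmonic N := (harmonic_pos (by omega)).le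
            exact_mod_cast this
        _ = ((harmonic N : ℚ) : ℝ) := one_mul _
        _ ≤ 1 + Real.log N := hharm_le
    -- final logarithm comparison
    have hL : Real.log 2 ≤ Real.log (2 * (N:ℝ) * W) :=
      Real.log_le_log (by norm_num) hN
    have hsplit : Real.log (2 * (N:ℝ) * W) = Real.log N + Real.log (2 * W) := by
      rw [show 2 * (N:ℝ) * W = (N:ℝ) * (2 * W) by ring]
      rw [Real.log_mul (by positivity) (by positivity)]
    have hfinal : 1 + Real.log N
        ≤ (1 + (1 - Real.log (2 * W)) / Real.log 2) * Real.log (2 * (N:ℝ) * W) := by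
      have hc : 0 ≤ (1 - Real.log (2 * W)) / Real.log 2 :=
        div_nonneg (by linarith) hlog2.le
      have h1 : 1 - Real.log (2 * W)
          ≤ (1 - Real.log (2 * W)) / Real.log 2 * Real.log (2 * (N:ℝ) * W) := by
        have h2 := mul_le_mul_of_nonneg_left hL hc
        rwa [div_mul_cancel₀ _ hlog2.ne'] at h2
      have hLN : Real.log N = Real.log (2 * (N:ℝ) * W) - Real.log (2 * W) := by
        rw [hsplit]; ring
      rw [hLN, add_mul, one_mul]
      linarith
    calc ∑ M ∈ Finset.range N, (T W (M + 1) + T W (N - M))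
        ≤ (4 / π ^ 2) * ∑ M ∈ Finset.range N, 1 / ((M + 1 : ℕ):ℝ) := hbound
      _ ≤ 1 + Real.log N := hstep2
      _ ≤ (1 + (1 - Real.log (2 * W)) / Real.log 2) * Real.log (2 * (N:ℝ) * W) := hfinal
end
end

section
/- For N ∈ ℕ and W ∈ (0, 1/2), let O^{(2)}_{N,W} := B_{N,W} ⊗ B_{N,W} be the N² × N² matrix indexed by pairs (n_1, n_2), (m_1, m_2) ∈ {0, …, N−1}² with entries ( sin(2πW(m_1−n_1)) / (π(m_1−n_1)) )·( sin(2πW(m_2−n_2)) / (π(m_2−n_2)) ) (each factor equal to 2W when its index difference is 0); this is the time-frequency limiting operator on ℤ² with time set {0,…,N−1}² and frequency band [−W,W]². Then Σ_ℓ λ_ℓ(O^{(2)}_{N,W}) = 4N²W², and for fixed W there exists a constant C (depending only on W) such that for all sufficiently large N: 0 ≤ 4N²W² − Σ_ℓ λ_ℓ(O^{(2)}_{N,W})² ≤ C·NW·log(NW). (That is, Σ_ℓ λ_ℓ(O^{(2)}_{N,W})² = 4N²W² − O(NW log(NW)).) -/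
set_option autoImplicit false

open Real Kronecker

noncomputable section

/-- The two-dimensional time-frequency limiting operator `O⁽²⁾_{N,W} = B_{N,W} ⊗ B_{N,W}`
on `ℤ²` with time set `{0,…,N−1}²` and frequency band `[−W,W]²`. -/
def prolateMatrix2D (N : ℕ) (W : ℝ) : Matrix (Fin N × Fin N) (Fin N × Fin N) ℝ :=
  (prolateMatrix N W) ⊗ₖ (prolateMatrix N W)

/-! ### Auxiliary analytic lemmas -/

lemma bern2Aux (x : ℝ) : (Polynomial.aeval x) (Polynomial.bernoulli 2) = x^2 - x + 1/6 := by
  rw [Polynomial.bernoulli]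
  simp [Finset.sum_range_succ, _root_.bernoulli_zero, _root_.bernoulli_one,
    _root_.bernoulli_eq_bernoulli'_of_ne_one (by decide : (2:ℕ) ≠ 1), bernoulli'_two]
  ring

/-- The basic summand `sin²(2πWk)/(πk)²`. -/
def ff (W : ℝ) (k : ℕ) : ℝ := (Real.sin (2*π*W*k))^2 / (π*k)^2

lemma hasSum_ff (W : ℝ) (hW : W ∈ Set.Ioo (0:ℝ) (1/2)) :
    HasSum (ff W) (W - 2*W^2) := by
  have hx : (2*W) ∈ Set.Icc (0:ℝ) 1 := ⟨by linarith [hW.1], by linarith [hW.2]⟩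
  have hc := hasSum_one_div_nat_pow_mul_cos one_ne_zero hx
  norm_num at hc
  rw [bern2Aux] at hc
  have hπ : (π:ℝ) ≠ 0 := Real.pi_ne_zero
  have h2 := (hasSum_zeta_two.sub hc).div_const (2*π^2)
  have hfun : (fun i : ℕ => (1 / (i:ℝ) ^ 2 - ((i:ℝ) ^ 2)⁻¹ * cos (2 * π * i * (2 * W))) / (2 * π ^ 2))
      = ff W := by
    funext k
    rcases Nat.eq_zero_or_pos k with rfl | hk
    · simp [ff]
    · have hk0 : (k:ℝ) ≠ 0 := Nat.cast_ne_zero.mpr hk.ne'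
      have hs : Real.sin (2*π*W*k) ^ 2 = 1/2 - Real.cos (2 * π * k * (2*W))/2 := by
        rw [Real.sin_sq_eq_half_sub]
        congr 2
        ring
      rw [ff, hs, mul_pow, div_eq_div_iff (by positivity) (by positivity)]
      field_simp
  rw [hfun] at h2
  convert h2 using 1
  · rfl
  field_simp
  ring

lemma ff_zero (W : ℝ) : ff W 0 = 0 := by simp [ff]

lemma ff_nonneg (W : ℝ) (k : ℕ) : 0 ≤ ff W k := div_nonneg (sq_nonneg _) (sq_nonneg _)

lemma ff_le (W : ℝ) (k : ℕ) (hk : 1 ≤ k) : ff W k ≤ 2/π^2 * (1/(k:ℝ) - 1/((k:ℝ)+1)) := by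
  have hk1 : (1:ℝ) ≤ (k:ℝ) := by exact_mod_cast hk
  have hπ := Real.pi_pos
  have h1 : ff W k ≤ 1 / (π*(k:ℝ))^2 := by
    apply div_le_div_of_nonneg_right ?_ (by positivity)
    · exact Real.sin_sq_le_one _
  have h2 : (1:ℝ)/(k:ℝ) - 1/((k:ℝ)+1) = 1/((k:ℝ)*((k:ℝ)+1)) := by
    rw [div_sub_div _ _ (by positivity) (by positivity)]
    congr 1
    ring
  rw [h2]
  refine h1.trans ?_
  rw [div_mul_div_comm, mul_one, div_le_div_iff₀ (by positivity) (by positivity)]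
  nlinarith [sq_nonneg (π*(k:ℝ))]

/-- Partial sum of `ff` over `0..j` (equivalently `1..j` since `ff W 0 = 0`). -/
def FF (W : ℝ) (j : ℕ) : ℝ := ∑ k ∈ Finset.range (j+1), ff W k

lemma FF_nonneg (W : ℝ) (j : ℕ) : 0 ≤ FF W j :=
  Finset.sum_nonneg fun k _ => ff_nonneg W k

lemma FF_le (W : ℝ) (hW : W ∈ Set.Ioo (0:ℝ) (1/2)) (j : ℕ) : FF W j ≤ W - 2*W^2 :=
  sum_le_hasSum _ (fun k _ => ff_nonneg W k) (hasSum_ff W hW)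

lemma sum_range_ff_le (W : ℝ) (j M : ℕ) :
    ∑ k ∈ Finset.range M, ff W k ≤ FF W j + 2/π^2 * (1/((j:ℝ)+1)) := by
  have hπ := Real.pi_pos
  rcases le_or_gt M (j+1) with h | h
  · refine le_trans (Finset.sum_le_sum_of_subset_of_nonneg (Finset.range_subset_range.mpr h)
      (fun k _ _ => ff_nonneg W k)) ?_
    have h0 : (0:ℝ) ≤ 2/π^2 * (1/((j:ℝ)+1)) := by positivity
    unfold FF
    linarith [h0]
  · rw [← Finset.sum_range_add_sum_Ico _ (le_of_lt h)]
    unfold FF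
    have htel : ∑ k ∈ Finset.Ico (j+1) M, (2/π^2 * (1/(k:ℝ) - 1/((k:ℝ)+1)))
        = 2/π^2 * (1/((j:ℝ)+1) - 1/(M:ℝ)) := by
      rw [← Finset.mul_sum]
      congr 1
      have hc : ∀ k : ℕ, (1:ℝ)/(k:ℝ) - 1/((k:ℝ)+1)
          = (fun i : ℕ => 1/(i:ℝ)) k - (fun i : ℕ => 1/(i:ℝ)) (k+1) := by
        intro k; push_cast; ring
      rw [Finset.sum_congr rfl (fun k _ => hc k), Finset.sum_Ico_eq_sub _ (le_of_lt h)]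
      rw [Finset.sum_range_sub' (fun i : ℕ => 1/(i:ℝ)), Finset.sum_range_sub' (fun i : ℕ => 1/(i:ℝ))]
      push_cast
      ring
    have hstep : ∑ k ∈ Finset.Ico (j+1) M, ff W k ≤ 2/π^2 * (1/((j:ℝ)+1) - 1/(M:ℝ)) := by
      rw [← htel]
      apply Finset.sum_le_sum
      intro k hk
      exact ff_le W k (le_trans (Nat.le_add_left 1 j) (Finset.mem_Ico.mp hk).1)
    have hM : (0:ℝ) ≤ 1/(M:ℝ) := by positivity
    have hmono : 2/π^2 * (1/((j:ℝ)+1) - 1/(M:ℝ)) ≤ 2/π^2 * (1/((j:ℝ)+1)) := by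
      apply mul_le_mul_of_nonneg_left ?_ (by positivity)
      linarith
    linarith [hstep, hmono]

lemma le_FF_add (W : ℝ) (hW : W ∈ Set.Ioo (0:ℝ) (1/2)) (j : ℕ) :
    W - 2*W^2 ≤ FF W j + 2/π^2 * (1/((j:ℝ)+1)) := by
  refine hasSum_le_of_sum_le (hasSum_ff W hW) ?_
  intro s
  obtain ⟨M, hM⟩ : ∃ M, s ⊆ Finset.range M := ⟨(s.sup id) + 1, fun x hx =>
    Finset.mem_range.mpr (Nat.lt_succ_of_le (Finset.le_sup (f := id) hx))⟩
  exact le_trans (Finset.sum_le_sum_of_subset_of_nonneg hM (fun k _ _ => ff_nonneg W k))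
    (sum_range_ff_le W j M)

/-! ### Row sums of the prolate matrix -/

/-- The entries of the prolate matrix as a function of natural-number indices. -/
def EE (W : ℝ) (a b : ℕ) : ℝ :=
  if a = b then 2 * W
  else Real.sin (2 * π * W * ((a : ℝ) - (b : ℝ))) / (π * ((a : ℝ) - (b : ℝ)))

lemma prolate_eq_EE (N : ℕ) (W : ℝ) (m n : Fin N) :
    prolateMatrix N W m n = EE W (m : ℕ) (n : ℕ) := rfl

lemma EE_symm (W : ℝ) (a b : ℕ) : EE W a b = EE W b a := by
  rcases eq_or_ne a b with rfl | h
  · rfl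
  · rw [EE, EE, if_neg h, if_neg (Ne.symm h)]
    rw [show 2 * π * W * ((a:ℝ) - b) = -(2 * π * W * ((b:ℝ) - a)) by ring, Real.sin_neg]
    rw [show (π * ((a:ℝ) - b)) = -(π * ((b:ℝ) - a)) by ring]
    rw [neg_div_neg_eq]

lemma EE_sq_lt (W : ℝ) (a b : ℕ) (h : b < a) : (EE W a b)^2 = ff W (a - b) := by
  have hne : a ≠ b := Nat.ne_of_gt h
  have hc : ((a - b : ℕ) : ℝ) = (a:ℝ) - b := Nat.cast_sub h.le
  rw [EE, if_neg hne, div_pow, ff, hc]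

lemma EE_sq_gt (W : ℝ) (a b : ℕ) (h : a < b) : (EE W a b)^2 = ff W (b - a) := by
  have hne : a ≠ b := Nat.ne_of_lt h
  have hc : ((b - a : ℕ) : ℝ) = (b:ℝ) - a := Nat.cast_sub h.le
  rw [EE, if_neg hne, div_pow, ff, hc]
  have h1 : 2 * π * W * ((a:ℝ) - b) = -(2 * π * W * ((b:ℝ) - a)) := by ring
  have h2 : (π * ((a:ℝ) - b))^2 = (π * ((b:ℝ) - a))^2 := by ring
  rw [h1, Real.sin_neg, neg_sq, h2]

lemma sum_shift (W : ℝ) (j : ℕ) : ∑ i ∈ Finset.range j, ff W (i+1) = FF W j := by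
  rw [FF, Finset.sum_range_succ' (ff W) j, ff_zero, add_zero]

lemma row_sum (W : ℝ) (N a : ℕ) (ha : a < N) :
    ∑ b ∈ Finset.range N, (EE W a b)^2 = 4*W^2 + FF W a + FF W (N - 1 - a) := by
  rw [← Finset.sum_range_add_sum_Ico _ (Nat.succ_le_of_lt ha), Finset.sum_range_succ]
  have h1 : ∑ b ∈ Finset.range a, (EE W a b)^2 = FF W a := by
    have e1 : ∀ b ∈ Finset.range a, (EE W a b)^2 = (fun j => ff W (j+1)) (a - 1 - b) := by
      intro b hb
      rw [Finset.mem_range] at hb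
      rw [EE_sq_lt W a b hb]
      congr 1
      omega
    rw [Finset.sum_congr rfl e1, Finset.sum_range_reflect (fun j => ff W (j+1)) a, sum_shift]
  have h2 : (EE W a a)^2 = 4*W^2 := by rw [EE, if_pos rfl]; ring
  have h3 : ∑ b ∈ Finset.Ico (a+1) N, (EE W a b)^2 = FF W (N - 1 - a) := by
    rw [Finset.sum_Ico_eq_sum_range]
    have e3 : ∀ i ∈ Finset.range (N - (a+1)), (EE W a (a+1+i))^2 = ff W (i+1) := by
      intro i hi
      rw [EE_sq_gt W a (a+1+i) (by omega)]
      congr 1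
      omega
    rw [Finset.sum_congr rfl e3, sum_shift]
    congr 1
    omega
  rw [h1, h2, h3]
  ring

/-! ### Trace identities -/

lemma trace_eq_sum_eigen {n : Type*} [Fintype n] [DecidableEq n] (A : Matrix n n ℝ)
    (hA : A.IsHermitian) : A.trace = ∑ i, hA.eigenvalues i := by
  conv_lhs => rw [hA.spectral_theorem, Unitary.conjStarAlgAut_apply]
  rw [Matrix.trace_mul_cycle]
  rw [show (star (Matrix.IsHermitian.eigenvectorUnitary hA : Matrix n n ℝ)) *
      (Matrix.IsHermitian.eigenvectorUnitary hA : Matrix n n ℝ) = 1 from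
    Matrix.mem_unitaryGroup_iff'.mp (Matrix.IsHermitian.eigenvectorUnitary hA).2]
  rw [Matrix.one_mul, Matrix.trace_diagonal]
  simp [RCLike.ofReal]

lemma trace_sq_eq_sum_eigen_sq {n : Type*} [Fintype n] [DecidableEq n] (A : Matrix n n ℝ)
    (hA : A.IsHermitian) : (A * A).trace = ∑ i, (hA.eigenvalues i)^2 := by
  set U := (Matrix.IsHermitian.eigenvectorUnitary hA : Matrix n n ℝ) with hU
  set D := Matrix.diagonal ((RCLike.ofReal ∘ hA.eigenvalues : n → ℝ)) with hD
  have hsU : star U * U = 1 :=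
    Matrix.mem_unitaryGroup_iff'.mp (Matrix.IsHermitian.eigenvectorUnitary hA).2
  have hAA : A * A = U * (D * D) * star U := by
    conv_lhs => rw [hA.spectral_theorem, Unitary.conjStarAlgAut_apply]
    simp only [← hU, ← hD, Matrix.mul_assoc]
    rw [← Matrix.mul_assoc (star U) U, hsU, Matrix.one_mul]
  rw [hAA, Matrix.trace_mul_cycle, ← Matrix.mul_assoc, hsU, Matrix.one_mul]
  rw [hD, Matrix.diagonal_mul_diagonal, Matrix.trace_diagonal]
  simp [RCLike.ofReal, sq]

lemma trace_prolate (N : ℕ) (W : ℝ) : (prolateMatrix N W).trace = 2 * N * W := by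
  rw [Matrix.trace]
  have : ∀ m : Fin N, (prolateMatrix N W).diag m = 2 * W := by
    intro m
    simp [Matrix.diag, prolateMatrix]
  rw [Finset.sum_congr rfl (fun m _ => this m), Finset.sum_const, Finset.card_univ,
    Fintype.card_fin, nsmul_eq_mul]
  ring

lemma trace_prolate_sq (N : ℕ) (W : ℝ) :
    (prolateMatrix N W * prolateMatrix N W).trace
      = 4*N*W^2 + 2 * ∑ m ∈ Finset.range N, FF W m := by
  have hsum : ∀ m : Fin N, (prolateMatrix N W * prolateMatrix N W) m m
      = ∑ b ∈ Finset.range N, (EE W (m:ℕ) b)^2 := by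
    intro m
    rw [Matrix.mul_apply]
    have : ∀ n : Fin N, prolateMatrix N W m n * prolateMatrix N W n m
        = (EE W (m:ℕ) (n:ℕ))^2 := by
      intro n
      rw [prolate_eq_EE, prolate_eq_EE, EE_symm W (n:ℕ) (m:ℕ), sq]
    rw [Finset.sum_congr rfl (fun n _ => this n)]
    exact Fin.sum_univ_eq_sum_range (fun b => (EE W (m:ℕ) b)^2) N
  rw [Matrix.trace]
  have h2 : ∀ m : Fin N, (prolateMatrix N W * prolateMatrix N W).diag m
      = 4*W^2 + FF W (m:ℕ) + FF W (N - 1 - (m:ℕ)) := by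
    intro m
    rw [Matrix.diag, hsum m, row_sum W N (m:ℕ) m.is_lt]
  rw [Finset.sum_congr rfl (fun m _ => h2 m)]
  rw [Fin.sum_univ_eq_sum_range (fun a => 4*W^2 + FF W a + FF W (N - 1 - a)) N]
  simp only [Finset.sum_add_distrib, Finset.sum_const, Finset.card_range, nsmul_eq_mul]
  rw [show ∑ a ∈ Finset.range N, FF W (N - 1 - a) = ∑ a ∈ Finset.range N, FF W a from
    Finset.sum_range_reflect (FF W) N]
  ring

/-! ### Harmonic-sum bound -/

lemma sum_inv_le_log (N : ℕ) :
    ∑ m ∈ Finset.range N, (1:ℝ)/((m:ℝ)+1) ≤ 1 + Real.log N := by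
  have heq : ∑ m ∈ Finset.range N, (1:ℝ)/((m:ℝ)+1) = (harmonic N : ℝ) := by
    rw [harmonic_eq_sum_Icc]
    push_cast
    rw [← Finset.Ico_add_one_right_eq_Icc, Finset.sum_Ico_eq_sum_range]
    apply Finset.sum_congr rfl
    intro i _
    push_cast
    rw [one_div]
    congr 1
    ring
  rw [heq]
  exact harmonic_le_one_add_log N

/-! ### Main theorem -/

/-- `Σ_ℓ λ_ℓ(O⁽²⁾_{N,W}) = 4N²W²`, and for fixed `W ∈ (0,1/2)` there are a
constant `C` (depending only on `W`) and `N₀` such that for all `N ≥ N₀`: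
`0 ≤ 4N²W² − Σ_ℓ λ_ℓ(O⁽²⁾_{N,W})² ≤ C·NW·log(NW)`, i.e.
`Σ_ℓ λ_ℓ(O⁽²⁾_{N,W})² = 4N²W² − O(NW·log(NW))`. -/
theorem prolate2D_sum_sq_eigenvalues (W : ℝ) (hW : W ∈ Set.Ioo (0:ℝ) (1/2))
    (hH : ∀ N : ℕ, (prolateMatrix2D N W).IsHermitian) :
    (∀ N : ℕ, ∑ ℓ : Fin N × Fin N, (hH N).eigenvalues ℓ = 4 * (N : ℝ) ^ 2 * W ^ 2)
    ∧ ∃ C : ℝ, 0 < C ∧ ∃ N₀ : ℕ, ∀ N : ℕ, N₀ ≤ N →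
        0 ≤ 4 * (N : ℝ) ^ 2 * W ^ 2 - ∑ ℓ : Fin N × Fin N, ((hH N).eigenvalues ℓ) ^ 2
        ∧ 4 * (N : ℝ) ^ 2 * W ^ 2 - ∑ ℓ : Fin N × Fin N, ((hH N).eigenvalues ℓ) ^ 2
            ≤ C * ((N : ℝ) * W) * Real.log ((N : ℝ) * W) := by
  have hW0 := hW.1
  have hW2 := hW.2
  have hπ := Real.pi_pos
  constructor
  · intro N
    rw [← trace_eq_sum_eigen _ (hH N)]
    rw [prolateMatrix2D, Matrix.trace_kronecker, trace_prolate]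
    ring
  · have hlogW : Real.log W < 0 := Real.log_neg hW0 (by linarith)
    have hCpos : (0:ℝ) < 16/π^2 * (2 - Real.log W) :=
      mul_pos (by positivity) (by linarith)
    refine ⟨16/π^2 * (2 - Real.log W), hCpos, ⌈Real.exp 1 / W⌉₊, ?_⟩
    intro N hN
    -- the sum of squared eigenvalues equals `t²` where `t = trace (B*B)`
    set t : ℝ := (prolateMatrix N W * prolateMatrix N W).trace with ht
    have hsq : ∑ ℓ : Fin N × Fin N, ((hH N).eigenvalues ℓ) ^ 2 = t^2 := by
      rw [← trace_sq_eq_sum_eigen_sq _ (hH N)]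
      rw [prolateMatrix2D, ← Matrix.mul_kronecker_mul, Matrix.trace_kronecker, sq]
    -- basic bounds on N
    have hNpos : 0 < N := by
      have h1 : (0:ℝ) < Real.exp 1 / W := by positivity
      have := Nat.ceil_pos.mpr h1
      omega
    have hNR : Real.exp 1 / W ≤ (N:ℝ) := le_trans (Nat.le_ceil _) (Nat.cast_le.mpr hN)
    have hNW : Real.exp 1 ≤ (N:ℝ) * W := by
      rw [div_le_iff₀ hW0] at hNR
      linarith
    have hNWpos : (0:ℝ) < (N:ℝ) * W := lt_of_lt_of_le (Real.exp_pos 1) hNW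
    have hlogNW : 1 ≤ Real.log ((N:ℝ)*W) := by
      rw [← Real.log_exp 1]
      exact Real.log_le_log (Real.exp_pos 1) hNW
    -- bounds on t
    have htval : t = 4*N*W^2 + 2 * ∑ m ∈ Finset.range N, FF W m := trace_prolate_sq N W
    have ht_le : t ≤ 2*N*W := by
      rw [htval]
      have : ∑ m ∈ Finset.range N, FF W m ≤ ∑ m ∈ Finset.range N, (W - 2*W^2) :=
        Finset.sum_le_sum fun m _ => FF_le W hW m
      rw [Finset.sum_const, Finset.card_range, nsmul_eq_mul] at this
      nlinarith [this]
    have ht_nonneg : 0 ≤ t := by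
      rw [htval]
      have : 0 ≤ ∑ m ∈ Finset.range N, FF W m :=
        Finset.sum_nonneg fun m _ => FF_nonneg W m
      positivity
    have hgap : 2*(N:ℝ)*W - t ≤ 4/π^2 * (1 + Real.log N) := by
      rw [htval]
      have hterm : ∀ m ∈ Finset.range N, (W - 2*W^2) - FF W m ≤ 2/π^2 * (1/((m:ℝ)+1)) := by
        intro m _
        linarith [le_FF_add W hW m]
      have hsum1 : ∑ m ∈ Finset.range N, ((W - 2*W^2) - FF W m)
          ≤ ∑ m ∈ Finset.range N, 2/π^2 * (1/((m:ℝ)+1)) := Finset.sum_le_sum hterm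
      have hsum2 : ∑ m ∈ Finset.range N, 2/π^2 * (1/((m:ℝ)+1))
          = 2/π^2 * ∑ m ∈ Finset.range N, (1:ℝ)/((m:ℝ)+1) := by
        rw [Finset.mul_sum]
      have hsum3 : 2/π^2 * ∑ m ∈ Finset.range N, (1:ℝ)/((m:ℝ)+1)
          ≤ 2/π^2 * (1 + Real.log N) := by
        apply mul_le_mul_of_nonneg_left (sum_inv_le_log N) (by positivity)
      have hsplit : ∑ m ∈ Finset.range N, ((W - 2*W^2) - FF W m)
          = (N:ℝ) * (W - 2*W^2) - ∑ m ∈ Finset.range N, FF W m := by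
        rw [Finset.sum_sub_distrib, Finset.sum_const, Finset.card_range, nsmul_eq_mul]
      rw [hsplit] at hsum1
      have hexp : (N:ℝ) * (W - 2*W^2) = (N:ℝ)*W - 2*((N:ℝ)*W^2) := by ring
      have hexp2 : 4 * (N:ℝ) * W^2 = 4*((N:ℝ)*W^2) := by ring
      have hexp3 : 2 * (N:ℝ) * W = 2*((N:ℝ)*W) := by ring
      have hhalf : 4/π^2 * (1 + Real.log N) = 2*(2/π^2 * (1 + Real.log N)) := by ring
      linarith [hsum1, hsum2.le, hsum2.ge, hsum3, hexp.le, hexp.ge, hexp2.le, hexp2.ge,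
        hexp3.le, hexp3.ge, hhalf.le, hhalf.ge]
    -- convert the log N bound into a log (NW) bound
    have hlogN : Real.log N = Real.log ((N:ℝ)*W) - Real.log W := by
      have hlm : Real.log ((N:ℝ)*W) = Real.log N + Real.log W :=
        Real.log_mul (Nat.cast_ne_zero.mpr hNpos.ne') (ne_of_gt hW0)
      linarith
    have hkey : 1 + Real.log N ≤ (2 - Real.log W) * Real.log ((N:ℝ)*W) := by
      rw [hlogN]
      nlinarith [hlogNW, hlogW]
    -- final assembly
    rw [hsq]
    constructor
    · nlinarith [ht_le, ht_nonneg]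
    · have h1 : 4 * (N:ℝ)^2 * W^2 - t^2 ≤ (2*(N:ℝ)*W - t) * (4*(N:ℝ)*W) := by
        nlinarith [ht_le, ht_nonneg, hNWpos]
      have h2 : (2*(N:ℝ)*W - t) * (4*(N:ℝ)*W) ≤ (4/π^2 * (1 + Real.log N)) * (4*(N:ℝ)*W) := by
        apply mul_le_mul_of_nonneg_right hgap (by positivity)
      have h3 : (4/π^2 * (1 + Real.log N)) * (4*(N:ℝ)*W)
          ≤ (4/π^2 * ((2 - Real.log W) * Real.log ((N:ℝ)*W))) * (4*(N:ℝ)*W) := by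
        apply mul_le_mul_of_nonneg_right ?_ (by positivity)
        apply mul_le_mul_of_nonneg_left hkey (by positivity)
      have h4 : (4/π^2 * ((2 - Real.log W) * Real.log ((N:ℝ)*W))) * (4*(N:ℝ)*W)
          = 16/π^2 * (2 - Real.log W) * ((N:ℝ) * W) * Real.log ((N:ℝ)*W) := by
        ring
      linarith [h1, h2, h3, h4.le]
end
end
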